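/- arXiv:2508.18838 — 2 statements merged into one kernel-verified Lean document; each statement's English description precedes it below -/
import Mathlib

section
/- Let d ≥ 1 and k ≥ 1, and let G = (V,D) be a graph with no isolated vertices whose edge set D is a k-fold R_d-circuit. Then |D| ≤ d|V| − binom(d+1,2) + k, with equality if and only if G is R_d-rigid. Moreover, the minimum degree δ(G) of G satisfies d + 1 ≤ δ(G) ≤ 2d + (2k − d(d+1))/|V|. -/
open scoped BigOperators

/-- The row of the `d`-dimensional rigidity matrix of a realisation `p : V → ℝ^d`
indexed by the (unordered) edge `e`. -/
noncomputable def rigRow (d : ℕ) {V : Type*} [DecidableEq V]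
    (p : V → Fin d → ℝ) (e : Sym2 V) : V × Fin d → ℝ :=
  Sym2.lift
    ⟨fun u v wi =>
        (((if wi.1 = u then (1 : ℝ) else 0) - (if wi.1 = v then (1 : ℝ) else 0)) *
          (p u wi.2 - p v wi.2)),
      fun u v => by funext wi; ring⟩ e

/-- A realisation is generic if the coordinates of the points form an algebraically
independent set over `ℚ`. -/
def Generic (d : ℕ) {V : Type*} (p : V → Fin d → ℝ) : Prop :=
  AlgebraicIndependent ℚ fun vi : V × Fin d => p vi.1 vi.2

/-- `rrk d p F` : the rank of the set of rows of the rigidity matrix of `(K_V, p)`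
indexed by the edges in `F`.  For generic `p` this is the rank function `r_d` of
the generic `d`-dimensional rigidity matroid. -/
noncomputable def rrk (d : ℕ) {V : Type*} [Fintype V] [DecidableEq V]
    (p : V → Fin d → ℝ) (F : Set (Sym2 V)) : ℕ :=
  Module.finrank ℝ (Submodule.span ℝ (rigRow d p '' F))

/-- `D` is a `k`-fold circuit (with respect to the realisation `p`) :
`r (D \ {f}) = r D` for every `f ∈ D`, and `r D = |D| - k`. -/
def IsKFoldCircuit (d : ℕ) {V : Type*} [Fintype V] [DecidableEq V]
    (p : V → Fin d → ℝ) (D : Finset (Sym2 V)) (k : ℕ) : Prop :=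
  (∀ f ∈ D, rrk d p (↑D \ {f}) = rrk d p ↑D) ∧ rrk d p ↑D + k = D.card

/-- An `R_d`-circuit: `r C = |C| - 1` and `r (C \ {f}) = r C` for all `f ∈ C`. -/
def IsCircuit (d : ℕ) {V : Type*} [Fintype V] [DecidableEq V]
    (p : V → Fin d → ℝ) (C : Finset (Sym2 V)) : Prop :=
  IsKFoldCircuit d p C 1

/-- `A` is a part of the principal partition of the `k`-fold circuit `D`:
the parts are the sets `D \ B` where `B` runs over the `(k-1)`-fold circuits
contained in `D`. -/
def IsPrincipalPart (d : ℕ) {V : Type*} [Fintype V] [DecidableEq V]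
    (p : V → Fin d → ℝ) (D : Finset (Sym2 V)) (k : ℕ) (A : Finset (Sym2 V)) : Prop :=
  ∃ B ⊆ D, IsKFoldCircuit d p B (k - 1) ∧ A = D \ B

/-- Closure in the rigidity matroid: all edges of `K_V` whose addition to `F`
does not increase the rank. -/
def rcl (d : ℕ) {V : Type*} [Fintype V] [DecidableEq V]
    (p : V → Fin d → ℝ) (F : Set (Sym2 V)) : Set (Sym2 V) :=
  {e | ¬ e.IsDiag ∧ rrk d p (insert e F) = rrk d p F}

/-- A `k`-fold circuit `D` with principal partition `A_1, …, A_ℓ` is balanced if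
`r_d (⋂ i, cl_d (D \ A_i)) = ℓ - k`. -/
def IsBalanced (d : ℕ) {V : Type*} [Fintype V] [DecidableEq V]
    (p : V → Fin d → ℝ) (D : Finset (Sym2 V)) (k : ℕ) : Prop :=
  rrk d p (⋂ A ∈ {A | IsPrincipalPart d p D k A}, rcl d p ↑(D \ A)) + k =
    Set.ncard {A | IsPrincipalPart d p D k A}

/-- A vertex is monochromatic if all edges of `D` incident with it lie in a single
part of the principal partition (and technicolour otherwise). -/
def Monochromatic (d : ℕ) {V : Type*} [Fintype V] [DecidableEq V]
    (p : V → Fin d → ℝ) (D : Finset (Sym2 V)) (k : ℕ) (w : V) : Prop :=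
  ∃ A, IsPrincipalPart d p D k A ∧ ∀ e ∈ D, w ∈ e → e ∈ A

/-- The graph `(W, E)` is `R_d`-rigid: it is a complete graph on at most `d+1`
vertices, or `r_d(E) = d|W| - (d+1 choose 2)`. -/
def IsRigidOn (d : ℕ) {V : Type*} [Fintype V] [DecidableEq V]
    (p : V → Fin d → ℝ) (W : Finset V) (E : Finset (Sym2 V)) : Prop :=
  (W.card ≤ d + 1 ∧ ∀ u ∈ W, ∀ w ∈ W, u ≠ w → s(u, w) ∈ E) ∨
    (rrk d p ↑E : ℤ) + ((d + 1).choose 2 : ℤ) = (d : ℤ) * (W.card : ℤ)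

/-- The edge set of the cone of (the graph with edge set) `D` over a new vertex,
realised as `none : Option V`. -/
def coneEdges {V : Type*} [Fintype V] [DecidableEq V] (D : Finset (Sym2 V)) :
    Finset (Sym2 (Option V)) :=
  D.image (Sym2.map Option.some) ∪
    Finset.univ.image fun u : V => s((Option.some u : Option V), (none : Option V))

/-- The degree of the vertex `w` in the edge set `D`. -/
def degIn {V : Type*} [Fintype V] [DecidableEq V] (D : Finset (Sym2 V)) (w : V) : ℕ :=
  (D.filter fun e => w ∈ e).card

/-- The set of vertices incident with an edge of `F`. -/
def esupp {V : Type*} [Fintype V] [DecidableEq V] (F : Finset (Sym2 V)) : Finset V :=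
  Finset.univ.filter fun w => ∃ e ∈ F, w ∈ e


set_option linter.unusedSectionVars false
set_option maxHeartbeats 1000000

section Aux

variable {V : Type*} [Fintype V] [DecidableEq V] {d : ℕ} {p : V → Fin d → ℝ}

lemma Generic.aeval_ne_zero (hp : Generic d p) {q : MvPolynomial (V × Fin d) ℚ}
    (hq : q ≠ 0) : MvPolynomial.aeval (fun vi : V × Fin d => p vi.1 vi.2) q ≠ 0 := by
  intro hz
  exact hq (hp (by rw [hz, map_zero]))

lemma diff_det_ne_zero (hp : Generic d p) {m : ℕ} (hm : m ≤ d) (w : V)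
    (u : Fin m → V) (hu : Function.Injective u) (hw : ∀ j, u j ≠ w) :
    (Matrix.of fun i j : Fin m =>
        p w (Fin.castLE hm i) - p (u j) (Fin.castLE hm i)).det ≠ 0 := by
  classical
  set Q : Matrix (Fin m) (Fin m) (MvPolynomial (V × Fin d) ℚ) :=
    Matrix.of fun i j => MvPolynomial.X (w, Fin.castLE hm i) -
      MvPolynomial.X (u j, Fin.castLE hm i) with hQ
  set f : MvPolynomial (V × Fin d) ℚ →ₐ[ℚ] ℝ :=
    MvPolynomial.aeval fun vi : V × Fin d => p vi.1 vi.2 with hf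
  have hmap : (Matrix.of fun i j : Fin m =>
        p w (Fin.castLE hm i) - p (u j) (Fin.castLE hm i)) = f.mapMatrix Q := by
    ext i j
    simp [hQ, hf, Matrix.map_apply]
  rw [hmap, ← AlgHom.map_det]
  apply hp.aeval_ne_zero
  intro h0
  set σ : V × Fin d → ℚ := fun vi =>
    if h : ∃ j : Fin m, u j = vi.1 ∧ Fin.castLE hm j = vi.2 then (-1 : ℚ) else 0 with hσ
  have hev := congrArg (MvPolynomial.eval σ) h0
  rw [RingHom.map_det, map_zero] at hev
  have hId : (MvPolynomial.eval σ).mapMatrix Q = 1 := by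
    ext i j
    by_cases hij : i = j
    · subst hij
      have h1 : ¬ ∃ j : Fin m, u j = w ∧ Fin.castLE hm j = Fin.castLE hm i := by
        rintro ⟨j, hj1, _⟩; exact hw j hj1
      have h2 : ∃ j' : Fin m, u j' = u i ∧ Fin.castLE hm j' = Fin.castLE hm i := ⟨i, rfl, rfl⟩
      simp [hQ, hσ, Matrix.map_apply, h1, h2, hw i]
    · have h1 : ¬ ∃ j' : Fin m, u j' = w ∧ Fin.castLE hm j' = Fin.castLE hm i := by
        rintro ⟨j', hj1, _⟩; exact hw j' hj1
      have h2 : ¬ ∃ j' : Fin m, u j' = u j ∧ Fin.castLE hm j' = Fin.castLE hm i := by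
        rintro ⟨j', hj1, hj2⟩
        exact hij ((Fin.castLE_injective hm hj2).symm ▸ (hu hj1 ▸ rfl) : i = j)
      simp [hQ, hσ, Matrix.map_apply, h1, h2, Matrix.one_apply, hij, hw i, hu.ne hij]
  rw [hId] at hev
  simp at hev

lemma diff_li_fin (hp : Generic d p) {m : ℕ} (hm : m ≤ d) (w : V)
    (u : Fin m → V) (hu : Function.Injective u) (hw : ∀ j, u j ≠ w) :
    LinearIndependent ℝ (fun j : Fin m => (fun i => p w i - p (u j) i : Fin d → ℝ)) := by
  classical
  rw [Fintype.linearIndependent_iff]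
  intro c hc j
  have hdet := diff_det_ne_zero hp hm w u hu hw
  have hmv : (Matrix.of fun i j : Fin m =>
      p w (Fin.castLE hm i) - p (u j) (Fin.castLE hm i)).mulVec c = 0 := by
    funext i
    have := congrFun hc (Fin.castLE hm i)
    simpa [Matrix.mulVec, dotProduct, mul_comm, Finset.sum_apply] using this
  have := Matrix.eq_zero_of_mulVec_eq_zero hdet hmv
  exact congrFun this j

lemma diff_li (hp : Generic d p) (w : V) (s : Finset V) (hws : w ∉ s)
    (hcard : s.card ≤ d) :
    LinearIndependent ℝ (fun u : s => (fun i => p w i - p u.1 i : Fin d → ℝ)) := by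
  classical
  set e : s ≃ Fin s.card := s.equivFin with he
  set u : Fin s.card → V := fun j => (e.symm j).1 with hu
  have huinj : Function.Injective u := fun a b hab =>
    e.symm.injective (Subtype.ext hab)
  have huw : ∀ j, u j ≠ w := fun j hj => hws (hj ▸ (e.symm j).2)
  have h1 := diff_li_fin hp hcard w u huinj huw
  have h2 : LinearIndependent ℝ
      ((fun j : Fin s.card => (fun i => p w i - p (u j) i : Fin d → ℝ)) ∘ e) :=
    (linearIndependent_equiv e).mpr h1
  convert h2 using 1
  funext x
  simp [hu, Function.comp]

lemma rigRow_mk (a b : V) :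
    rigRow d p s(a, b) = fun wi =>
      (((if wi.1 = a then (1 : ℝ) else 0) - (if wi.1 = b then (1 : ℝ) else 0)) *
        (p a wi.2 - p b wi.2)) := rfl

/-- Neighbours of `w` in `D`. -/
def nbrs (D : Finset (Sym2 V)) (w : V) : Finset V :=
  Finset.univ.filter fun u => u ≠ w ∧ s(w, u) ∈ D

lemma filter_eq_image_nbrs {D : Finset (Sym2 V)} (hsimple : ∀ e ∈ D, ¬ e.IsDiag) (w : V) :
    D.filter (fun e => w ∈ e) = (nbrs D w).image (fun u => s(w, u)) := by
  ext e
  simp only [Finset.mem_filter, Finset.mem_image, nbrs, Finset.mem_univ, true_and]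
  constructor
  · rintro ⟨he, hwe⟩
    induction e using Sym2.ind with
    | _ a b =>
      rcases Sym2.mem_iff.1 hwe with h | h
      · subst h
        have hab : b ≠ w := fun hb => by
          apply hsimple _ he; rw [hb]; exact Sym2.mk_isDiag_iff.2 rfl
        exact ⟨b, ⟨hab, he⟩, rfl⟩
      · subst h
        have hab : a ≠ w := fun hb => by
          apply hsimple _ he; rw [hb]; exact Sym2.mk_isDiag_iff.2 rfl
        exact ⟨a, ⟨hab, by rwa [Sym2.eq_swap]⟩, Sym2.eq_swap⟩
  · rintro ⟨u, ⟨hu, huD⟩, rfl⟩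
    exact ⟨huD, Sym2.mem_iff.2 (Or.inl rfl)⟩

lemma degIn_eq_card_nbrs {D : Finset (Sym2 V)} (hsimple : ∀ e ∈ D, ¬ e.IsDiag) (w : V) :
    degIn D w = (nbrs D w).card := by
  rw [degIn, filter_eq_image_nbrs hsimple w]
  apply Finset.card_image_of_injOn
  intro a _ b _ hab
  exact Sym2.congr_right.1 hab

lemma degree_lower_bound (hp : Generic d p) {D : Finset (Sym2 V)} {k : ℕ}
    (hD : IsKFoldCircuit d p D k) (hsimple : ∀ e ∈ D, ¬ e.IsDiag)
    (hcov : ∀ w : V, ∃ e ∈ D, w ∈ e) (w : V) : d + 1 ≤ degIn D w := by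
  classical
  by_contra hlt
  push_neg at hlt
  rw [degIn_eq_card_nbrs hsimple w] at hlt
  set N := nbrs D w with hN
  have hcard : N.card ≤ d := by omega
  have hwN : w ∉ N := by simp [hN, nbrs]
  obtain ⟨e0, he0D, hwe0⟩ := hcov w
  have he0 : e0 ∈ (nbrs D w).image (fun u => s(w, u)) := by
    rw [← filter_eq_image_nbrs hsimple w]; exact Finset.mem_filter.2 ⟨he0D, hwe0⟩
  obtain ⟨u0, hu0N, rfl⟩ := Finset.mem_image.1 he0
  set f : Sym2 V := s(w, u0) with hf
  have hle : Submodule.span ℝ (rigRow d p '' (↑D \ {f})) ≤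
      Submodule.span ℝ (rigRow d p '' ↑D) :=
    Submodule.span_mono (Set.image_mono Set.diff_subset)
  have heq : Submodule.span ℝ (rigRow d p '' (↑D \ {f})) =
      Submodule.span ℝ (rigRow d p '' ↑D) := by
    apply Submodule.eq_of_le_of_finrank_le hle
    exact le_of_eq (hD.1 f he0D).symm
  have hmem : rigRow d p f ∈ Submodule.span ℝ (rigRow d p '' (↑D \ {f})) := by
    rw [heq]
    exact Submodule.subset_span ⟨f, he0D, rfl⟩
  set π : (V × Fin d → ℝ) →ₗ[ℝ] (Fin d → ℝ) :=
    LinearMap.funLeft ℝ ℝ (fun i : Fin d => (w, i)) with hπ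
  set g : V → (Fin d → ℝ) := fun u => (fun i => p w i - p u i) with hg
  have hπf : π (rigRow d p f) = g u0 := by
    funext i
    have hu0w : u0 ≠ w := (Finset.mem_filter.1 hu0N).2.1
    simp [hπ, hf, hg, rigRow_mk, LinearMap.funLeft, hu0w.symm]
  have hπmem : g u0 ∈ Submodule.span ℝ (π '' (rigRow d p '' (↑D \ {f}))) := by
    rw [← Submodule.map_span]
    exact hπf ▸ Submodule.mem_map_of_mem hmem
  have himg : π '' (rigRow d p '' (↑D \ {f})) ⊆ insert 0 (g '' (↑N \ {u0})) := by
    rintro x ⟨y, ⟨e, ⟨heD, hef⟩, rfl⟩, rfl⟩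
    by_cases hwe : w ∈ e
    · have he' : e ∈ (nbrs D w).image (fun u => s(w, u)) := by
        rw [← filter_eq_image_nbrs hsimple w]; exact Finset.mem_filter.2 ⟨heD, hwe⟩
      obtain ⟨u, huN, rfl⟩ := Finset.mem_image.1 he'
      have huw : u ≠ w := (Finset.mem_filter.1 huN).2.1
      have huu0 : u ≠ u0 := fun h => hef (by rw [h]; rfl)
      refine Set.mem_insert_iff.2 (Or.inr ⟨u, ⟨huN, huu0⟩, ?_⟩)
      funext i
      simp [hπ, hg, rigRow_mk, LinearMap.funLeft, huw.symm]
    · refine Set.mem_insert_iff.2 (Or.inl ?_)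
      induction e using Sym2.ind with
      | _ a b =>
        have hwa : w ≠ a := fun h => hwe (h ▸ Sym2.mem_iff.2 (Or.inl rfl))
        have hwb : w ≠ b := fun h => hwe (h ▸ Sym2.mem_iff.2 (Or.inr rfl))
        funext i
        simp [hπ, rigRow_mk, LinearMap.funLeft, hwa, hwb]
  have hspan : g u0 ∈ Submodule.span ℝ (g '' (↑N \ {u0})) := by
    have := Submodule.span_mono himg hπmem
    rwa [Submodule.span_insert_zero] at this
  have hli := diff_li hp w N hwN hcard
  have hnot := hli.notMem_span_image (s := {x : N | x.1 ≠ u0}) (x := ⟨u0, hu0N⟩)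
    (by simp)
  apply hnot
  have : (fun u : N => (fun i => p w i - p u.1 i : Fin d → ℝ)) '' {x : N | x.1 ≠ u0}
      = g '' (↑N \ {u0}) := by
    ext x
    constructor
    · rintro ⟨⟨u, huN⟩, hu, rfl⟩
      exact ⟨u, ⟨huN, hu⟩, rfl⟩
    · rintro ⟨u, ⟨huN, hu⟩, rfl⟩
      exact ⟨⟨u, huN⟩, hu, rfl⟩
  rw [this]
  exact hspan

/-- index type for the trivial motions -/
abbrev MotIdx (d : ℕ) := Fin d ⊕ {q : Fin d × Fin d // q.1 < q.2}

/-- the trivial motions: translations and rotations -/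
def mot (d : ℕ) {V : Type*} (p : V → Fin d → ℝ) : MotIdx d → (V × Fin d → ℝ)
  | Sum.inl i => fun vj => if vj.2 = i then 1 else 0
  | Sum.inr q => fun vj => (if vj.2 = q.1.1 then 1 else 0) * p vj.1 q.1.2 -
      (if vj.2 = q.1.2 then 1 else 0) * p vj.1 q.1.1

lemma card_motIdx : Fintype.card (MotIdx d) = (d + 1).choose 2 := by
  have hP : Fintype.card {q : Fin d × Fin d // q.1 < q.2} = d.choose 2 := by
    have e : {q : Fin d × Fin d // q.1 < q.2} ≃ Σ b : Fin d, Fin b.val :=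
      { toFun := fun q => ⟨q.1.2, ⟨q.1.1.val, q.2⟩⟩
        invFun := fun x => ⟨(⟨x.2.val, lt_trans x.2.isLt x.1.isLt⟩, x.1), x.2.isLt⟩
        left_inv := fun q => by ext <;> simp
        right_inv := fun x => by ext <;> simp }
    rw [Fintype.card_congr e, Fintype.card_sigma]
    simp only [Fintype.card_fin]
    rw [Fin.sum_univ_eq_sum_range (fun i => i), Finset.sum_range_id, Nat.choose_two_right]
  rw [Fintype.card_sum, Fintype.card_fin, hP]
  rw [Nat.choose_succ_succ]
  simp [Nat.choose_one_right]

/-- rows are orthogonal (w.r.t. the dot product) to all trivial motions -/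
lemma row_dot_mot (e : Sym2 V) (c : MotIdx d) :
    ∑ vj : V × Fin d, rigRow d p e vj * mot d p c vj = 0 := by
  induction e using Sym2.ind with
  | _ a b =>
    cases c with
    | inl i =>
      simp only [rigRow_mk, mot, Fintype.sum_prod_type, mul_ite, mul_one, mul_zero,
        Finset.sum_ite_eq', Finset.mem_univ, if_true]
      simp [sub_mul, Finset.sum_sub_distrib, Finset.sum_ite_eq', Finset.sum_ite_eq]
    | inr q =>
      obtain ⟨⟨A, B⟩, hAB⟩ := q
      have hne : A ≠ B := ne_of_lt hAB
      simp only [rigRow_mk, mot, Fintype.sum_prod_type]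
      have : ∀ v : V, ∑ j : Fin d,
          ((if v = a then (1:ℝ) else 0) - if v = b then 1 else 0) * (p a j - p b j) *
            ((if j = A then (1:ℝ) else 0) * p v B - (if j = B then 1 else 0) * p v A)
          = ((if v = a then (1:ℝ) else 0) - if v = b then 1 else 0) *
              ((p a A - p b A) * p v B - (p a B - p b B) * p v A) := by
        intro v
        rw [Finset.sum_eq_add_of_mem A B (Finset.mem_univ _) (Finset.mem_univ _) hne ?_]
        · simp [hne, hne.symm]; ring
        · intro j hj ⟨hjA, hjB⟩
          simp [hjA, hjB]
      rw [Finset.sum_congr rfl fun v _ => this v]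
      simp [sub_mul, mul_sub, Finset.sum_sub_distrib, Finset.sum_ite_eq', Finset.sum_ite_eq]
      ring

/-- dot product with a fixed vector, as a linear functional -/
def dotL (d : ℕ) (y : Fin d → ℝ) : (Fin d → ℝ) →ₗ[ℝ] ℝ where
  toFun x := ∑ l, y l * x l
  map_add' x₁ x₂ := by simp [mul_add, Finset.sum_add_distrib]
  map_smul' a x := by simp [Finset.mul_sum, mul_left_comm]

lemma mot_li (hp : Generic d p) (hn : d + 1 ≤ Fintype.card V) :
    LinearIndependent ℝ (mot d p) := by
  classical
  rcases Nat.eq_zero_or_pos d with rfl | hd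
  · have : IsEmpty (MotIdx 0) := by infer_instance
    exact linearIndependent_empty_type
  obtain ⟨emb⟩ : Nonempty (Fin (d + 1) ↪ V) := by
    rw [← Fintype.card_fin (d+1)] at hn
    exact Function.Embedding.nonempty_of_card_le hn
  set w : V := emb (Fin.last d) with hw
  set s : Finset V := Finset.univ.image (fun j : Fin d => emb j.castSucc) with hs
  have hws : w ∉ s := by
    simp only [hs, Finset.mem_image, Finset.mem_univ, true_and, not_exists]
    intro j hj
    exact (Fin.castSucc_lt_last j).ne (emb.injective hj)
  have hcard : s.card = d := by
    rw [hs, Finset.card_image_of_injective _ (fun a b hab =>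
      Fin.castSucc_injective d (emb.injective hab))]
    simp
  have hli := diff_li hp w s hws hcard.le
  haveI : Nonempty s := (Finset.card_pos.mp (hcard ▸ hd)).coe_sort
  have hspan : Submodule.span ℝ
      (Set.range (fun u : s => (fun i => p w i - p u.1 i : Fin d → ℝ))) = ⊤ := by
    apply hli.span_eq_top_of_card_eq_finrank
    rw [Fintype.card_coe, hcard, Module.finrank_fin_fun]
  rw [Fintype.linearIndependent_iff]
  intro c hc
  set cc : Fin d × Fin d → ℝ := fun q => if h : q.1 < q.2 then c (Sum.inr ⟨q, h⟩) else 0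
    with hcc
  have hev : ∀ (x : V) (j : Fin d),
      c (Sum.inl j) + ∑ q : {q : Fin d × Fin d // q.1 < q.2}, c (Sum.inr q) *
        ((if j = q.1.1 then (1:ℝ) else 0) * p x q.1.2 -
         (if j = q.1.2 then (1:ℝ) else 0) * p x q.1.1) = 0 := by
    intro x j
    have h0 := congrFun hc (x, j)
    simp only [Finset.sum_apply, Pi.smul_apply, smul_eq_mul, Pi.zero_apply] at h0
    rw [Fintype.sum_sum_type] at h0
    have e1 : ∑ i : Fin d, c (Sum.inl i) * mot d p (Sum.inl i) (x, j) = c (Sum.inl j) := by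
      simp [mot, mul_ite, Finset.sum_ite_eq]
    have e2 : ∑ q : {q : Fin d × Fin d // q.1 < q.2},
        c (Sum.inr q) * mot d p (Sum.inr q) (x, j)
        = ∑ q : {q : Fin d × Fin d // q.1 < q.2}, c (Sum.inr q) *
        ((if j = q.1.1 then (1:ℝ) else 0) * p x q.1.2 -
         (if j = q.1.2 then (1:ℝ) else 0) * p x q.1.1) := by
      apply Finset.sum_congr rfl
      intro q _
      have : ∀ A : Fin d, (if j = A then (1:ℝ) else 0) = (if A = j then 1 else 0) := by
        intro A; by_cases h : j = A <;> simp [h, Ne.symm, eq_comm]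
      simp [mot, this]
    rw [e1, e2] at h0
    exact h0
  have hrot : ∀ (x : V) (j : Fin d),
      ∑ q : {q : Fin d × Fin d // q.1 < q.2}, c (Sum.inr q) *
        ((if j = q.1.1 then (1:ℝ) else 0) * p x q.1.2 -
         (if j = q.1.2 then (1:ℝ) else 0) * p x q.1.1)
      = ∑ l, (cc (j, l) - cc (l, j)) * p x l := by
    intro x j
    have h1 : ∑ q : {q : Fin d × Fin d // q.1 < q.2}, c (Sum.inr q) *
        ((if j = q.1.1 then (1:ℝ) else 0) * p x q.1.2 -
         (if j = q.1.2 then (1:ℝ) else 0) * p x q.1.1)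
        = ∑ q : Fin d × Fin d, cc q *
        ((if j = q.1 then (1:ℝ) else 0) * p x q.2 -
         (if j = q.2 then (1:ℝ) else 0) * p x q.1) := by
      calc ∑ q : {q : Fin d × Fin d // q.1 < q.2}, c (Sum.inr q) *
            ((if j = q.1.1 then (1:ℝ) else 0) * p x q.1.2 -
             (if j = q.1.2 then (1:ℝ) else 0) * p x q.1.1)
          = ∑ q : {q : Fin d × Fin d // q.1 < q.2}, cc q.1 *
            ((if j = q.1.1 then (1:ℝ) else 0) * p x q.1.2 -
             (if j = q.1.2 then (1:ℝ) else 0) * p x q.1.1) := by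
            apply Finset.sum_congr rfl
            intro q _
            rw [hcc]
            simp only [dif_pos q.2]
        _ = ∑ q ∈ Finset.univ.filter (fun q : Fin d × Fin d => q.1 < q.2), cc q *
            ((if j = q.1 then (1:ℝ) else 0) * p x q.2 -
             (if j = q.2 then (1:ℝ) else 0) * p x q.1) := by
            exact (Finset.sum_subtype (p := fun q : Fin d × Fin d => q.1 < q.2)
              (Finset.univ.filter (fun q : Fin d × Fin d => q.1 < q.2))
              (fun q => by simp)
              (fun q : Fin d × Fin d => cc q *
                ((if j = q.1 then (1:ℝ) else 0) * p x q.2 -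
                 (if j = q.2 then (1:ℝ) else 0) * p x q.1))).symm
        _ = ∑ q : Fin d × Fin d, cc q *
            ((if j = q.1 then (1:ℝ) else 0) * p x q.2 -
             (if j = q.2 then (1:ℝ) else 0) * p x q.1) := by
            apply Finset.sum_filter_of_ne
            intro q _ hq
            by_contra hlt
            exact hq (by simp [hcc, dif_neg hlt])
    rw [h1, Fintype.sum_prod_type]
    have e3 : ∀ a : Fin d, ∑ b : Fin d, cc (a, b) *
        ((if j = a then (1:ℝ) else 0) * p x b - (if j = b then (1:ℝ) else 0) * p x a)
        = (if j = a then (1:ℝ) else 0) * (∑ b, cc (a, b) * p x b)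
          - (∑ b, (if j = b then (1:ℝ) else 0) * (cc (a, b) * p x a)) := by
      intro a
      rw [Finset.mul_sum, ← Finset.sum_sub_distrib]
      apply Finset.sum_congr rfl; intros; ring
    rw [Finset.sum_congr rfl fun a _ => e3 a, Finset.sum_sub_distrib]
    have e4 : ∑ a : Fin d, (if j = a then (1:ℝ) else 0) * (∑ b, cc (a, b) * p x b)
        = ∑ b, cc (j, b) * p x b := by
      simp [ite_mul, Finset.sum_ite_eq]
    have e5 : ∑ a : Fin d, ∑ b : Fin d, (if j = b then (1:ℝ) else 0) * (cc (a, b) * p x a)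
        = ∑ a, cc (a, j) * p x a := by
      rw [Finset.sum_comm]
      simp [ite_mul, Finset.sum_ite_eq]
    rw [e4, e5, ← Finset.sum_sub_distrib]
    apply Finset.sum_congr rfl
    intros; ring
  have hfun : ∀ j B : Fin d, cc (j, B) - cc (B, j) = 0 := by
    intro j B
    have hker : ∀ x : V, dotL d (fun l => cc (j, l) - cc (l, j))
        (fun l => p w l - p x l) = 0 := by
      intro x
      have h1 := hev x j
      have h2 := hev w j
      rw [hrot] at h1 h2
      simp only [dotL, LinearMap.coe_mk, AddHom.coe_mk]
      have e6 : ∑ l, (cc (j, l) - cc (l, j)) * (p w l - p x l)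
          = ∑ l, (cc (j, l) - cc (l, j)) * p w l
            - ∑ l, (cc (j, l) - cc (l, j)) * p x l := by
        rw [← Finset.sum_sub_distrib]; apply Finset.sum_congr rfl; intros; ring
      rw [e6]
      linarith [h1, h2]
    have hzero : dotL d (fun l => cc (j, l) - cc (l, j)) = 0 := by
      apply LinearMap.ext_on hspan
      rintro y ⟨u, rfl⟩
      simpa using hker u.1
    have := congrFun (congrArg (fun f => f.toFun) hzero) (Pi.single B 1)
    simpa [dotL, Pi.single_apply, mul_ite, Finset.sum_ite_eq] using this
  have hinr : ∀ q : {q : Fin d × Fin d // q.1 < q.2}, c (Sum.inr q) = 0 := by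
    rintro ⟨⟨A, B⟩, hAB⟩
    have h := hfun A B
    have hBA : ¬ (B < A) := asymm hAB
    rw [hcc] at h
    simp only [dif_pos hAB, dif_neg hBA, sub_zero] at h
    exact h
  intro i
  cases i with
  | inr q => exact hinr q
  | inl j =>
    have h := hev w j
    rw [Finset.sum_eq_zero (fun q _ => by rw [hinr q, zero_mul])] at h
    simpa using h

/-- Main rank upper bound. -/
lemma rrk_le (hp : Generic d p) (hn : d + 1 ≤ Fintype.card V) (F : Set (Sym2 V)) :
    rrk d p F + (d + 1).choose 2 ≤ Fintype.card V * d := by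
  classical
  set e : (V × Fin d → ℝ) ≃ₗ[ℝ] EuclideanSpace ℝ (V × Fin d) :=
    (WithLp.linearEquiv 2 ℝ (V × Fin d → ℝ)).symm with he
  set K : Submodule ℝ (EuclideanSpace ℝ (V × Fin d)) :=
    Submodule.span ℝ (Set.range (fun c => e (mot d p c))) with hK
  have hKrank : Module.finrank ℝ K = (d + 1).choose 2 := by
    rw [hK, show (Set.range fun c => e (mot d p c)) = Set.range (⇑e.toLinearMap ∘ mot d p)
      from rfl, finrank_span_eq_card ((mot_li hp hn).map' e.toLinearMap e.ker)]
    exact card_motIdx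
  have hrows : Submodule.span ℝ (e '' (rigRow d p '' F)) ≤ Kᗮ := by
    rw [Submodule.span_le]
    rintro x ⟨y, hy, rfl⟩
    rw [SetLike.mem_coe, Submodule.mem_orthogonal]
    intro u hu
    induction hu using Submodule.span_induction with
    | mem z hz =>
      obtain ⟨c, rfl⟩ := hz
      obtain ⟨ee, _, rfl⟩ := hy
      show (inner ℝ (e (mot d p c)) (e (rigRow d p ee)) : ℝ) = 0
      rw [PiLp.inner_apply]
      simp only [RCLike.inner_apply, conj_trivial]
      calc ∑ vj : V × Fin d, e (rigRow d p ee) vj * e (mot d p c) vj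
          = ∑ vj : V × Fin d, rigRow d p ee vj * mot d p c vj := by
            apply Finset.sum_congr rfl; intro vj _; rfl
        _ = 0 := row_dot_mot ee c
    | zero => simp
    | add _ _ _ _ h1 h2 => simp [inner_add_left, h1, h2]
    | smul a _ _ h1 => simp [inner_smul_left, h1]
  have hfr : rrk d p F = Module.finrank ℝ (Submodule.span ℝ (e '' (rigRow d p '' F))) := by
    rw [rrk, ← LinearEquiv.finrank_map_eq e, Submodule.map_span]
    rfl
  have h1 : Module.finrank ℝ (Submodule.span ℝ (e '' (rigRow d p '' F)))
      ≤ Module.finrank ℝ Kᗮ := Submodule.finrank_mono hrows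
  have h2 := Submodule.finrank_add_finrank_orthogonal K
  have h3 : Module.finrank ℝ (EuclideanSpace ℝ (V × Fin d)) = Fintype.card V * d := by
    rw [finrank_euclideanSpace, Fintype.card_prod, Fintype.card_fin]
  omega

lemma handshake {D : Finset (Sym2 V)} (hsimple : ∀ e ∈ D, ¬ e.IsDiag) :
    ∑ w : V, degIn D w = 2 * D.card := by
  classical
  have key : ∀ e ∈ D, (∑ w : V, if w ∈ e then (1:ℕ) else 0) = 2 := by
    intro e he
    induction e using Sym2.ind with
    | _ a b =>
      have hab : a ≠ b := by
        intro h
        exact hsimple _ he (h ▸ Sym2.mk_isDiag_iff.2 rfl)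
      rw [← Finset.card_filter]
      have : Finset.univ.filter (fun w => w ∈ s(a, b)) = {a, b} := by
        ext w
        simp [Sym2.mem_iff]
      rw [this, Finset.card_insert_of_notMem (by simp [hab]), Finset.card_singleton]
  unfold degIn
  simp_rw [Finset.card_filter]
  rw [Finset.sum_comm, Finset.sum_congr rfl key, Finset.sum_const, smul_eq_mul, mul_comm]

end Aux

/-- Lemma 3.1: edge count and minimum-degree bounds for `k`-fold `R_d`-circuits. -/
theorem kfold_circuit_edge_count_and_degree
    (d k : ℕ) (hd : 1 ≤ d) (hk : 1 ≤ k)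
    {V : Type*} [Fintype V] [DecidableEq V]
    (D : Finset (Sym2 V)) (hsimple : ∀ e ∈ D, ¬ e.IsDiag)
    (hcov : ∀ w : V, ∃ e ∈ D, w ∈ e)
    (p : V → Fin d → ℝ) (hp : Generic d p)
    (hD : IsKFoldCircuit d p D k) :
    ((D.card : ℤ) ≤ (d : ℤ) * (Fintype.card V : ℤ) - ((d+1).choose 2 : ℤ) + (k : ℤ)) ∧
    (((D.card : ℤ) = (d : ℤ) * (Fintype.card V : ℤ) - ((d+1).choose 2 : ℤ) + (k : ℤ)) ↔
        IsRigidOn d p Finset.univ D) ∧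
    (∀ w : V, d + 1 ≤ degIn D w) ∧
    (∃ w : V, (degIn D w : ℚ) ≤
        2 * (d : ℚ) + (2 * (k : ℚ) - (d : ℚ) * ((d : ℚ) + 1)) / (Fintype.card V : ℚ)) := by
  classical
  -- `V` is nonempty
  have hDne : D.Nonempty := by
    rcases D.eq_empty_or_nonempty with rfl | h
    · exfalso
      have := hD.2
      simp at this
      omega
    · exact h
  have hVne : Nonempty V := by
    obtain ⟨e, he⟩ := hDne
    induction e using Sym2.ind with
    | _ a b => exact ⟨a⟩
  -- part 3 : minimum degree at least d+1
  have hdeg : ∀ w : V, d + 1 ≤ degIn D w := fun w =>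
    degree_lower_bound hp hD hsimple hcov w
  -- |V| ≥ d+2
  have hn2 : d + 2 ≤ Fintype.card V := by
    obtain ⟨w⟩ := hVne
    have h1 := hdeg w
    rw [degIn_eq_card_nbrs hsimple w] at h1
    have hwN : w ∉ nbrs D w := by simp [nbrs]
    have : (insert w (nbrs D w)).card ≤ Fintype.card V := by
      rw [← Finset.card_univ]
      exact Finset.card_le_card (Finset.subset_univ _)
    rw [Finset.card_insert_of_notMem hwN] at this
    omega
  have hn1 : d + 1 ≤ Fintype.card V := by omega
  -- rank bound
  have hrk : rrk d p ↑D + (d + 1).choose 2 ≤ Fintype.card V * d := rrk_le hp hn1 ↑D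
  have hcardD : rrk d p ↑D + k = D.card := hD.2
  -- some abbreviations for the integer arithmetic
  set n : ℕ := Fintype.card V with hn
  set r : ℕ := rrk d p ↑D with hr
  set C : ℕ := (d + 1).choose 2 with hC
  have hmulcomm : (d : ℤ) * (n : ℤ) = ((n * d : ℕ) : ℤ) := by push_cast; ring
  -- part 1
  have part1 : ((D.card : ℤ) ≤ (d : ℤ) * (n : ℤ) - (C : ℤ) + (k : ℤ)) := by
    rw [hmulcomm]
    have : (D.card : ℤ) = (r : ℤ) + (k : ℤ) := by exact_mod_cast hcardD.symm
    rw [this]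
    have : (r : ℤ) + (C : ℤ) ≤ ((n * d : ℕ) : ℤ) := by exact_mod_cast hrk
    omega
  refine ⟨part1, ?_, hdeg, ?_⟩
  · -- part 2 : equality iff rigid
    constructor
    · intro heq
      right
      rw [Finset.card_univ, ← hn, ← hr, ← hC]
      have : (D.card : ℤ) = (r : ℤ) + (k : ℤ) := by exact_mod_cast hcardD.symm
      rw [this] at heq
      omega
    · intro hrig
      rcases hrig with ⟨hcard, _⟩ | hrig
      · exfalso
        rw [Finset.card_univ, ← hn] at hcard
        omega
      · rw [Finset.card_univ, ← hn, ← hr, ← hC] at hrig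
        have : (D.card : ℤ) = (r : ℤ) + (k : ℤ) := by exact_mod_cast hcardD.symm
        omega
  · -- part 4 : minimum degree upper bound
    obtain ⟨w0, _, hw0⟩ := Finset.exists_min_image Finset.univ (degIn D)
      ⟨Classical.arbitrary V, Finset.mem_univ _⟩
    refine ⟨w0, ?_⟩
    have hsum : ∑ w : V, degIn D w = 2 * D.card := handshake hsimple
    have hmin : n * degIn D w0 ≤ 2 * D.card := by
      rw [← hsum]
      calc n * degIn D w0 = ∑ _w : V, degIn D w0 := by
            rw [Finset.sum_const, smul_eq_mul, Finset.card_univ]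
        _ ≤ ∑ w : V, degIn D w := Finset.sum_le_sum fun w _ => hw0 w (Finset.mem_univ w)
    have hC2 : 2 * C = d * (d + 1) := by
      have h2 : 2 ∣ (d + 1) * d := by
        rw [mul_comm]; exact (Nat.even_mul_succ_self d).two_dvd
      rw [hC, Nat.choose_two_right, Nat.add_sub_cancel, Nat.mul_div_cancel' h2, mul_comm]
    have hnpos : (0 : ℚ) < (n : ℚ) := by
      have : 0 < n := by omega
      exact_mod_cast this
    have hQ : (degIn D w0 : ℚ) * (n : ℚ) ≤
        2 * (d : ℚ) * (n : ℚ) + (2 * (k : ℚ) - (d : ℚ) * ((d : ℚ) + 1)) := by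
      have b1 : (n : ℚ) * (degIn D w0 : ℚ) ≤ 2 * (D.card : ℚ) := by exact_mod_cast hmin
      have b2 : (D.card : ℚ) = (r : ℚ) + (k : ℚ) := by exact_mod_cast hcardD.symm
      have b3 : (r : ℚ) + (C : ℚ) ≤ (n : ℚ) * (d : ℚ) := by exact_mod_cast hrk
      have b4 : 2 * (C : ℚ) = (d : ℚ) * ((d : ℚ) + 1) := by exact_mod_cast hC2
      nlinarith [b1, b2, b3, b4]
    calc (degIn D w0 : ℚ) = (degIn D w0 : ℚ) * (n : ℚ) / (n : ℚ) := by
          field_simp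
      _ ≤ (2 * (d : ℚ) * (n : ℚ) + (2 * (k : ℚ) - (d : ℚ) * ((d : ℚ) + 1))) / (n : ℚ) :=
          by gcongr
      _ = 2 * (d : ℚ) + (2 * (k : ℚ) - (d : ℚ) * ((d : ℚ) + 1)) / (n : ℚ) := by
          field_simp
end

section
/- Let d ≥ 1 and let G1=(V1,E1) and G2=(V2,E2) be graphs with V1 ∩ V2 = {u,w}, E1 ∩ E2 = {uw} =: {e}, and suppose that r_d(Ei ∖ {e}) = r_d(Ei) for i = 1,2 (i.e., e is not a coloop of the rigidity matroid of Gi). Then a set C ⊆ E1 ∪ E2 is an R_d-circuit if and only if C is an R_d-circuit contained in E1, or C is an R_d-circuit contained in E2, or C = (C1 ∪ C2) ∖ {e} where, for i = 1,2, Ci is an R_d-circuit with e ∈ Ci ⊆ Ei. Consequently, a set C ⊆ (E1 ∪ E2) ∖ {e} is an R_d-circuit if and only if C is an R_d-circuit contained in E1 ∖ {e} or in E2 ∖ {e}, or C = (C1 ∪ C2) ∖ {e} with Ci as above. -/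
open scoped BigOperators

/-! ### Auxiliary machinery for the proof -/

section RigidityAux

set_option linter.unusedSectionVars false in
lemma rigRow_apply' {d : ℕ} {V : Type*} [DecidableEq V] {p : V → Fin d → ℝ}
    (a b : V) (x : V) (i : Fin d) :
    rigRow d p s(a, b) (x, i) =
      (((if x = a then (1 : ℝ) else 0) - (if x = b then (1 : ℝ) else 0)) *
          (p a i - p b i)) := rfl

/-- nontrivial linear dependence among the rows indexed by `C` -/
def RigDep (d : ℕ) {V : Type*} [Fintype V] [DecidableEq V] (p : V → Fin d → ℝ)
    (C : Finset (Sym2 V)) : Prop :=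
  ∃ lam : Sym2 V → ℝ, (∃ g ∈ C, lam g ≠ 0) ∧ ∑ e ∈ C, lam e • rigRow d p e = 0

variable {d : ℕ} {V : Type*} [Fintype V] [DecidableEq V] {p : V → Fin d → ℝ}

set_option linter.unusedSectionVars false

lemma dep_mono {C C' : Finset (Sym2 V)} (h : C ⊆ C') (hC : RigDep d p C) :
    RigDep d p C' := by
  obtain ⟨lam, ⟨g, hg, hg0⟩, hsum⟩ := hC
  classical
  refine ⟨fun e => if e ∈ C then lam e else 0, ⟨g, h hg, by simpa [hg]⟩, ?_⟩
  rw [← Finset.sum_subset h (fun e _ he => by simp [he])]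
  simpa using hsum.symm ▸ (Finset.sum_congr rfl fun e he => by simp [he]).symm

lemma rrk_le_card (C : Finset (Sym2 V)) : rrk d p ↑C ≤ C.card := by
  classical
  have h : rigRow d p '' ↑C = ↑(C.image (rigRow d p)) := by simp [Finset.coe_image]
  rw [rrk, h]
  exact le_trans (finrank_span_finset_le_card _) (Finset.card_image_le)

lemma rrk_mono {F F' : Set (Sym2 V)} (h : F ⊆ F') : rrk d p F ≤ rrk d p F' :=
  Submodule.finrank_mono (Submodule.span_mono (Set.image_mono h))

lemma rrk_eq_card_iff (C : Finset (Sym2 V)) :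
    rrk d p ↑C = C.card ↔ ¬ RigDep d p C := by
  classical
  have h1 : rrk d p ↑C = C.card ↔
      LinearIndependent ℝ (fun x : {x // x ∈ C} => rigRow d p x) := by
    rw [linearIndependent_iff_card_eq_finrank_span]
    have h2 : Set.range (fun x : {x // x ∈ C} => rigRow d p x) = rigRow d p '' ↑C := by
      ext v; simp [Set.range, Set.image]
    rw [h2, Fintype.card_coe]
    unfold rrk Set.finrank
    exact eq_comm
  rw [h1, Fintype.linearIndependent_iff]
  constructor
  · rintro h ⟨lam, ⟨g, hg, hg0⟩, hsum⟩
    have h3 := h (fun i => lam i.1) ?_ ⟨g, hg⟩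
    · exact hg0 h3
    · rw [← Finset.sum_attach C (fun e => lam e • rigRow d p e)] at hsum
      exact hsum
  · intro h g hsum i
    by_contra hi
    exact h ⟨fun e => if he : e ∈ C then g ⟨e, he⟩ else 0,
      ⟨i.1, i.2, by simpa [i.2]⟩, by
        rw [← Finset.sum_attach C
          (fun e => (if he : e ∈ C then g ⟨e, he⟩ else 0) • rigRow d p e)]
        simpa using hsum⟩

lemma isCircuit_iff (C : Finset (Sym2 V)) :
    IsCircuit d p C ↔ RigDep d p C ∧ ∀ g ∈ C, ¬ RigDep d p (C.erase g) := by
  constructor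
  · rintro ⟨hmin, hcard⟩
    have hdep : RigDep d p C := by
      by_contra h
      rw [← rrk_eq_card_iff] at h
      omega
    refine ⟨hdep, fun g hg => ?_⟩
    rw [← rrk_eq_card_iff]
    have h1 := hmin g hg
    rw [show (↑C \ {g} : Set (Sym2 V)) = ↑(C.erase g) by simp [Finset.coe_erase]] at h1
    rw [h1, Finset.card_erase_of_mem hg]
    omega
  · rintro ⟨hdep, hmin⟩
    have hne : C.Nonempty := by
      obtain ⟨lam, ⟨g, hg, _⟩, _⟩ := hdep
      exact ⟨g, hg⟩
    have hlt : rrk d p ↑C ≠ C.card := fun h => (rrk_eq_card_iff C).mp h hdep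
    have hle : rrk d p ↑C ≤ C.card := rrk_le_card C
    have key : ∀ g ∈ C, rrk d p (↑C \ {g}) = C.card - 1 := by
      intro g hg
      rw [show (↑C \ {g} : Set (Sym2 V)) = ↑(C.erase g) by simp [Finset.coe_erase]]
      rw [← Finset.card_erase_of_mem hg, rrk_eq_card_iff]
      exact hmin g hg
    have hgeq : rrk d p ↑C = C.card - 1 := by
      obtain ⟨g, hg⟩ := hne
      have h2 : rrk d p (↑C \ {g}) ≤ rrk d p ↑C := rrk_mono (by simp)
      rw [key g hg] at h2
      omega
    have hcard1 : 1 ≤ C.card := Finset.card_pos.mpr hne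
    exact ⟨fun g hg => by rw [key g hg, hgeq], by omega⟩

lemma circ_coeffs {C : Finset (Sym2 V)}
    (h : RigDep d p C ∧ ∀ g ∈ C, ¬ RigDep d p (C.erase g)) :
    ∃ lam : Sym2 V → ℝ, (∀ g ∈ C, lam g ≠ 0) ∧
      ∑ e ∈ C, lam e • rigRow d p e = 0 := by
  obtain ⟨⟨lam, ⟨g0, hg0, hg00⟩, hsum⟩, hmin⟩ := h
  refine ⟨lam, fun g hg hgz => ?_, hsum⟩
  refine hmin g hg ⟨lam, ⟨g0, Finset.mem_erase.mpr ⟨fun h => hg00 (h ▸ hgz), hg0⟩, hg00⟩, ?_⟩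
  rw [← Finset.add_sum_erase C _ hg] at hsum
  simpa [hgz] using hsum

lemma span_ker {S : Set (Sym2 V)} (φ : ((V × Fin d) → ℝ) →ₗ[ℝ] ℝ)
    (h : ∀ e ∈ S, φ (rigRow d p e) = 0) {v}
    (hv : v ∈ Submodule.span ℝ (rigRow d p '' S)) : φ v = 0 := by
  have hle : Submodule.span ℝ (rigRow d p '' S) ≤ LinearMap.ker φ :=
    Submodule.span_le.mpr (by rintro _ ⟨e, he, rfl⟩; exact h e he)
  exact hle hv

lemma sum_ind (a b : V) (g : V → ℝ) :
    ∑ x, (((if x = a then (1 : ℝ) else 0) - (if x = b then 1 else 0)) * g x)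
      = g a - g b := by
  have h : ∀ x, (((if x = a then (1 : ℝ) else 0) - (if x = b then 1 else 0)) * g x)
      = (if x = a then g x else 0) - (if x = b then g x else 0) := by
    intro x; split_ifs <;> ring
  simp only [h, Finset.sum_sub_distrib, Finset.sum_ite_eq' Finset.univ,
    Finset.mem_univ, if_true]

/-- sum-of-blocks functional -/
noncomputable def sumF (d : ℕ) (V : Type*) [Fintype V] (i : Fin d) :
    ((V × Fin d) → ℝ) →ₗ[ℝ] ℝ where
  toFun v := ∑ x, v (x, i)
  map_add' a b := by simp [Finset.sum_add_distrib]
  map_smul' c a := by simp [Finset.mul_sum]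

/-- torque functional -/
noncomputable def torF (d : ℕ) {V : Type*} [Fintype V] (p : V → Fin d → ℝ)
    (i j : Fin d) : ((V × Fin d) → ℝ) →ₗ[ℝ] ℝ where
  toFun v := ∑ x, (v (x, i) * p x j - v (x, j) * p x i)
  map_add' a b := by
    simp only [Pi.add_apply]
    rw [← Finset.sum_add_distrib]
    congr 1; funext x; ring
  map_smul' c a := by
    simp only [Pi.smul_apply, smul_eq_mul, RingHom.id_apply]
    rw [Finset.mul_sum]
    congr 1; funext x; ring

lemma sumF_row (i : Fin d) (e : Sym2 V) : sumF d V i (rigRow d p e) = 0 := by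
  induction e using Sym2.inductionOn with
  | hf a b =>
    show (∑ x, rigRow d p s(a, b) (x, i)) = 0
    simp only [rigRow_apply']
    rw [sum_ind a b (fun _ => p a i - p b i)]
    ring

lemma torF_row (i j : Fin d) (e : Sym2 V) : torF d p i j (rigRow d p e) = 0 := by
  induction e using Sym2.inductionOn with
  | hf a b =>
    show (∑ x, (rigRow d p s(a, b) (x, i) * p x j
      - rigRow d p s(a, b) (x, j) * p x i)) = 0
    simp only [rigRow_apply']
    have h : ∀ x : V,
        (((if x = a then (1:ℝ) else 0) - (if x = b then 1 else 0)) * (p a i - p b i) * p x j -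
         ((if x = a then (1:ℝ) else 0) - (if x = b then 1 else 0)) * (p a j - p b j) * p x i)
        = (((if x = a then (1:ℝ) else 0) - (if x = b then 1 else 0)) *
            ((p a i - p b i) * p x j - (p a j - p b j) * p x i)) := by
      intro x; ring
    rw [Finset.sum_congr rfl (fun x _ => h x),
      sum_ind a b (fun x => (p a i - p b i) * p x j - (p a j - p b j) * p x i)]
    ring

lemma proj_row_zero {W : Finset V} (e : Sym2 V) (he : ∀ x ∈ e, x ∈ W)
    {x : V} (hx : x ∉ W) (i : Fin d) :
    rigRow d p e (x, i) = 0 := by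
  induction e using Sym2.inductionOn with
  | hf a b =>
    have ha : a ∈ W := he a (by simp)
    have hb : b ∈ W := he b (Sym2.mem_mk_right a b)
    have hxa : x ≠ a := fun h => hx (h ▸ ha)
    have hxb : x ≠ b := fun h => hx (h ▸ hb)
    simp [rigRow_apply', hxa, hxb]

lemma generic_sub_ne (hp : Generic d p) {u w : V} (huw : u ≠ w) (i : Fin d) :
    p u i - p w i ≠ 0 := by
  intro h
  have hinj : Function.Injective (fun vi : V × Fin d => p vi.1 vi.2) := hp.injective
  have h2 : (u, i) = (w, i) := hinj (by simpa using sub_eq_zero.mp h)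
  exact huw (congrArg Prod.fst h2)

lemma key_span (hd : 1 ≤ d) (V1 V2 : Finset V) (E1 E2 : Finset (Sym2 V))
    (u w : V) (huw : u ≠ w) (hV12 : V1 ∩ V2 = {u, w})
    (hE1 : ∀ e ∈ E1, ¬ e.IsDiag ∧ ∀ x ∈ e, x ∈ V1)
    (hE2 : ∀ e ∈ E2, ¬ e.IsDiag ∧ ∀ x ∈ e, x ∈ V2)
    (hp : Generic d p)
    (v : (V × Fin d) → ℝ)
    (hv1 : v ∈ Submodule.span ℝ (rigRow d p '' ↑E1))
    (hv2 : v ∈ Submodule.span ℝ (rigRow d p '' ↑E2)) :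
    ∃ c : ℝ, v = c • rigRow d p s(u, w) := by
  classical
  have hq : ∀ i : Fin d, p u i - p w i ≠ 0 := fun i => generic_sub_ne hp huw i
  have hsupp : ∀ x : V, x ≠ u → x ≠ w → ∀ i, v (x, i) = 0 := by
    intro x hxu hxw i
    have hx12 : x ∉ V1 ∨ x ∉ V2 := by
      by_contra h
      push_neg at h
      have h2 : x ∈ V1 ∩ V2 := Finset.mem_inter.mpr ⟨h.1, h.2⟩
      rw [hV12] at h2
      rcases Finset.mem_insert.mp h2 with h' | h'
      · exact hxu h'
      · exact hxw (Finset.mem_singleton.mp h')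
    rcases hx12 with hx | hx
    · exact span_ker (LinearMap.proj (x, i))
        (fun e he => proj_row_zero e (fun y hy => (hE1 e (by simpa using he)).2 y hy) hx i) hv1
    · exact span_ker (LinearMap.proj (x, i))
        (fun e he => proj_row_zero e (fun y hy => (hE2 e (by simpa using he)).2 y hy) hx i) hv2
  have hsum0 : ∀ i, v (u, i) + v (w, i) = 0 := by
    intro i
    have h0 : sumF d V i v = 0 := span_ker _ (fun e _ => sumF_row i e) hv1
    have h3 : (∑ x, v (x, i)) = ∑ x ∈ ({u, w} : Finset V), v (x, i) :=
      (Finset.sum_subset (Finset.subset_univ _)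
        (fun x _ hx => by
          have hxu : x ≠ u := fun h => hx (by simp [h])
          have hxw : x ≠ w := fun h => hx (by simp [h])
          exact hsupp x hxu hxw i)).symm
    rw [show sumF d V i v = ∑ x, v (x, i) from rfl, h3, Finset.sum_pair huw] at h0
    exact h0
  have htor : ∀ i j, v (u, i) * (p u j - p w j) = v (u, j) * (p u i - p w i) := by
    intro i j
    have h0 : torF d p i j v = 0 := span_ker _ (fun e _ => torF_row i j e) hv1
    have hres : (∑ x, (v (x, i) * p x j - v (x, j) * p x i))
        = ∑ x ∈ ({u, w} : Finset V), (v (x, i) * p x j - v (x, j) * p x i) :=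
      (Finset.sum_subset (Finset.subset_univ _)
        (fun x _ hx => by
          have hxu : x ≠ u := fun h => hx (by simp [h])
          have hxw : x ≠ w := fun h => hx (by simp [h])
          rw [hsupp x hxu hxw i, hsupp x hxu hxw j]; ring)).symm
    rw [show torF d p i j v = ∑ x, (v (x, i) * p x j - v (x, j) * p x i) from rfl,
      hres, Finset.sum_pair huw] at h0
    have hwv : ∀ k, v (w, k) = -v (u, k) := fun k => by linarith [hsum0 k]
    rw [hwv i, hwv j] at h0
    nlinarith [h0]
  set i0 : Fin d := ⟨0, hd⟩
  refine ⟨v (u, i0) / (p u i0 - p w i0), ?_⟩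
  have hcu : ∀ i, v (u, i) = v (u, i0) / (p u i0 - p w i0) * (p u i - p w i) := by
    intro i
    rw [div_mul_eq_mul_div, eq_div_iff (hq i0)]
    linarith [htor i i0]
  funext wi
  obtain ⟨x, i⟩ := wi
  rcases eq_or_ne x u with rfl | hxu
  · simp only [Pi.smul_apply, rigRow_apply', smul_eq_mul, if_pos rfl,
      if_neg huw, if_true]
    rw [hcu i]; field_simp; ring
  rcases eq_or_ne x w with rfl | hxw
  · have h4 : v (x, i) = -v (u, i) := by linarith [hsum0 i]
    simp only [Pi.smul_apply, rigRow_apply', smul_eq_mul, if_neg hxu, if_pos rfl, if_true]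
    rw [h4, hcu i]; field_simp; ring
  · simp only [Pi.smul_apply, rigRow_apply', smul_eq_mul, if_neg hxu, if_neg hxw]
    rw [hsupp x hxu hxw i]; ring

lemma side_min (e0 : Sym2 V) (C A B : Finset (Sym2 V)) (lam : Sym2 V → ℝ) (c : ℝ)
    (hdisj : Disjoint A B) (hunion : A ∪ B = C) (he0A : e0 ∉ A)
    (hBne : B.Nonempty) (hcne : c ≠ 0)
    (hlam : ∀ e ∈ C, lam e ≠ 0)
    (hmin : ∀ g ∈ C, ¬ RigDep d p (C.erase g))
    (hsA : ∑ e ∈ A, lam e • rigRow d p e = c • rigRow d p e0)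
    (hsB : ∑ e ∈ B, lam e • rigRow d p e = (-c) • rigRow d p e0) :
    RigDep d p (insert e0 A) ∧ ∀ g ∈ insert e0 A, ¬ RigDep d p ((insert e0 A).erase g) := by
  classical
  have hAC : A ⊆ C := hunion ▸ Finset.subset_union_left
  have hBC : B ⊆ C := hunion ▸ Finset.subset_union_right
  obtain ⟨g2, hg2B⟩ := hBne
  have hg2C : g2 ∈ C := hBC hg2B
  have hAsub : A ⊆ C.erase g2 := fun e he => Finset.mem_erase.mpr
    ⟨fun h => (Finset.disjoint_left.mp hdisj he) (h ▸ hg2B), hAC he⟩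
  have hnodepA : ¬ RigDep d p A := fun hdep => hmin g2 hg2C (dep_mono hAsub hdep)
  constructor
  · refine ⟨fun e => if e = e0 then -c else lam e,
      ⟨e0, Finset.mem_insert_self _ _, by simpa using hcne⟩, ?_⟩
    rw [Finset.sum_insert he0A]
    have h0' : (fun e => if e = e0 then -c else lam e) e0 = -c := by simp
    have h1 : ∑ e ∈ A, (fun e => if e = e0 then -c else lam e) e • rigRow d p e
        = ∑ e ∈ A, lam e • rigRow d p e :=
      Finset.sum_congr rfl (fun e he => by
        have hne : e ≠ e0 := fun h => he0A (h ▸ he)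
        show (if e = e0 then -c else lam e) • rigRow d p e = lam e • rigRow d p e
        rw [if_neg hne])
    rw [h0', h1, hsA, neg_smul, neg_add_cancel]
  · intro g hg
    rcases Finset.mem_insert.mp hg with rfl | hgA
    · rw [Finset.erase_insert he0A]; exact hnodepA
    · have hge0 : g ≠ e0 := fun h => he0A (h ▸ hgA)
      have hgC : g ∈ C := hAC hgA
      intro hdep
      obtain ⟨ν, ⟨g', hg', hg'0⟩, hνs⟩ := hdep
      rw [Finset.erase_insert_of_ne (Ne.symm hge0)] at hνs hg'
      have he0Ag : e0 ∉ A.erase g := fun h => he0A (Finset.mem_of_mem_erase h)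
      rw [Finset.sum_insert he0Ag] at hνs
      set κ : Sym2 V → ℝ := fun e => if e ∈ B then (-(ν e0)/c) * lam e else ν e with hκ
      have hgB : g ∉ B := Finset.disjoint_left.mp hdisj hgA
      have hCg : C.erase g = (A.erase g) ∪ B := by
        rw [← hunion, Finset.erase_union_distrib, Finset.erase_eq_of_notMem hgB]
      have hsum : ∑ e ∈ C.erase g, κ e • rigRow d p e = 0 := by
        rw [hCg, Finset.sum_union (hdisj.mono (Finset.erase_subset _ _) le_rfl)]
        have h1 : ∑ e ∈ A.erase g, κ e • rigRow d p e
            = ∑ e ∈ A.erase g, ν e • rigRow d p e :=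
          Finset.sum_congr rfl (fun e he => by
            simp only [hκ]
            rw [if_neg (Finset.disjoint_left.mp hdisj (Finset.mem_of_mem_erase he))])
        have h2 : ∑ e ∈ B, κ e • rigRow d p e = (ν e0) • rigRow d p e0 := by
          have h3 : ∀ e ∈ B, κ e • rigRow d p e
              = (-(ν e0)/c) • (lam e • rigRow d p e) := by
            intro e he
            simp only [hκ]
            rw [if_pos he, mul_smul]
          rw [Finset.sum_congr rfl h3, ← Finset.smul_sum, hsB, smul_smul]
          congr 1
          field_simp
        rw [h1, h2, add_comm]
        exact hνs
      have hwit : ∃ g'' ∈ C.erase g, κ g'' ≠ 0 := by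
        by_cases hν0 : ν e0 = 0
        · have hg'ne : g' ≠ e0 := fun h => hg'0 (h ▸ hν0)
          have hg'A : g' ∈ A.erase g := by
            rcases Finset.mem_insert.mp hg' with h | h
            · exact absurd h hg'ne
            · exact h
          refine ⟨g', hCg ▸ Finset.mem_union_left _ hg'A, ?_⟩
          simp only [hκ]
          rw [if_neg (Finset.disjoint_left.mp hdisj (Finset.mem_of_mem_erase hg'A))]
          exact hg'0
        · refine ⟨g2, hCg ▸ Finset.mem_union_right _ hg2B, ?_⟩
          simp only [hκ]
          rw [if_pos hg2B]
          exact mul_ne_zero (div_ne_zero (neg_ne_zero.mpr hν0) hcne) (hlam g2 hg2C)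
      exact hmin g hgC ⟨κ, hwit, hsum⟩

lemma side2_min (e0 : Sym2 V) (C1 C2 : Finset (Sym2 V))
    (h0 : rigRow d p e0 ≠ 0)
    (hkey : ∀ A B : Finset (Sym2 V), A ⊆ C1.erase e0 → B ⊆ C2.erase e0 →
      ∀ ν μ : Sym2 V → ℝ,
        ∑ e ∈ A, ν e • rigRow d p e = ∑ e ∈ B, μ e • rigRow d p e →
        ∃ c : ℝ, ∑ e ∈ A, ν e • rigRow d p e = c • rigRow d p e0)
    (he01 : e0 ∈ C1) (he02 : e0 ∈ C2)
    (hdisj : Disjoint (C1.erase e0) (C2.erase e0))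
    (hmin1 : ∀ g ∈ C1, ¬ RigDep d p (C1.erase g))
    (hmin2 : ∀ g ∈ C2, ¬ RigDep d p (C2.erase g))
    (g : Sym2 V) (hg : g ∈ C1.erase e0) :
    ¬ RigDep d p ((C1.erase e0 ∪ C2.erase e0).erase g) := by
  classical
  set A := C1.erase e0 with hA
  set B := C2.erase e0 with hB
  intro hdep
  obtain ⟨ν, ⟨g', hg', hg'0⟩, hνs⟩ := hdep
  have hge0 : g ≠ e0 := (Finset.mem_erase.mp hg).1
  have hgB : g ∉ B := Finset.disjoint_left.mp hdisj hg
  have hsplit : (A ∪ B).erase g = (A.erase g) ∪ B := by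
    rw [Finset.erase_union_distrib, Finset.erase_eq_of_notMem hgB]
  rw [hsplit] at hνs hg'
  rw [Finset.sum_union (hdisj.mono (Finset.erase_subset _ _) le_rfl)] at hνs
  have heq : ∑ e ∈ A.erase g, ν e • rigRow d p e
      = ∑ e ∈ B, (fun e => -ν e) e • rigRow d p e := by
    simp only [neg_smul, Finset.sum_neg_distrib]
    exact eq_neg_of_add_eq_zero_left hνs
  obtain ⟨c, hc⟩ := hkey (A.erase g) B (Finset.erase_subset _ _) le_rfl ν _ heq
  have he0Ag : e0 ∉ A.erase g := fun h =>
    (Finset.mem_erase.mp (Finset.mem_of_mem_erase h)).1 rfl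
  by_cases hex : ∃ g'' ∈ A.erase g, ν g'' ≠ 0
  · obtain ⟨g'', hg''A, hg''0⟩ := hex
    apply hmin1 g (Finset.mem_of_mem_erase hg)
    have hC1g : C1.erase g = insert e0 (A.erase g) := by
      conv_lhs => rw [← Finset.insert_erase he01]
      rw [Finset.erase_insert_of_ne (Ne.symm hge0), hA]
    refine ⟨fun e => if e = e0 then -c else ν e,
      ⟨g'', hC1g ▸ Finset.mem_insert_of_mem hg''A, by
        have h5 : g'' ≠ e0 := fun h => he0Ag (h ▸ hg''A)
        simpa [h5] using hg''0⟩, ?_⟩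
    rw [hC1g, Finset.sum_insert he0Ag]
    have h0' : (fun e => if e = e0 then -c else ν e) e0 = -c := by simp
    have h1 : ∑ e ∈ A.erase g, (fun e => if e = e0 then -c else ν e) e • rigRow d p e
        = ∑ e ∈ A.erase g, ν e • rigRow d p e :=
      Finset.sum_congr rfl (fun e he => by
        have hne : e ≠ e0 := fun h => he0Ag (h ▸ he)
        show (if e = e0 then -c else ν e) • rigRow d p e = ν e • rigRow d p e
        rw [if_neg hne])
    rw [h0', h1, hc, neg_smul, neg_add_cancel]
  · push_neg at hex
    have hzero : ∑ e ∈ A.erase g, ν e • rigRow d p e = 0 :=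
      Finset.sum_eq_zero (fun e he => by rw [hex e he, zero_smul])
    have hc0 : c = 0 := by
      rw [hzero] at hc
      rcases smul_eq_zero.mp hc.symm with h | h
      · exact h
      · exact absurd h h0
    have hBzero : ∑ e ∈ B, ν e • rigRow d p e = 0 := by
      rw [hzero] at hνs
      simpa using hνs
    have hg'B : g' ∈ B := by
      rcases Finset.mem_union.mp hg' with h | h
      · exact absurd (hex g' h) hg'0
      · exact h
    exact hmin2 e0 he02 ⟨ν, ⟨g', hg'B, hg'0⟩, hBzero⟩

end RigidityAux

/-- Theorem 3.5: the circuits of the rigidity matroid of a graphical parallel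
connection / 2-sum. -/
theorem rigidity_parallel_connection_circuits
    (d : ℕ) (hd : 1 ≤ d) {V : Type*} [Fintype V] [DecidableEq V]
    (V1 V2 : Finset V) (E1 E2 : Finset (Sym2 V)) (u w : V) (huw : u ≠ w)
    (hV12 : V1 ∩ V2 = {u, w})
    (hE1 : ∀ e ∈ E1, ¬ e.IsDiag ∧ ∀ x ∈ e, x ∈ V1)
    (hE2 : ∀ e ∈ E2, ¬ e.IsDiag ∧ ∀ x ∈ e, x ∈ V2)
    (hE12 : E1 ∩ E2 = {s(u, w)})
    (p : V → Fin d → ℝ) (hp : Generic d p)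
    (hcoloop1 : rrk d p ↑(E1.erase (s(u, w))) = rrk d p ↑E1)
    (hcoloop2 : rrk d p ↑(E2.erase (s(u, w))) = rrk d p ↑E2) :
    (∀ C : Finset (Sym2 V), C ⊆ E1 ∪ E2 →
      (IsCircuit d p C ↔
        (C ⊆ E1 ∧ IsCircuit d p C) ∨ (C ⊆ E2 ∧ IsCircuit d p C) ∨
        ∃ C1 C2 : Finset (Sym2 V), IsCircuit d p C1 ∧ s(u, w) ∈ C1 ∧ C1 ⊆ E1 ∧
          IsCircuit d p C2 ∧ s(u, w) ∈ C2 ∧ C2 ⊆ E2 ∧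
          C = (C1 ∪ C2).erase (s(u, w)))) ∧
    (∀ C : Finset (Sym2 V), C ⊆ (E1 ∪ E2).erase (s(u, w)) →
      (IsCircuit d p C ↔
        (C ⊆ E1.erase (s(u, w)) ∧ IsCircuit d p C) ∨
        (C ⊆ E2.erase (s(u, w)) ∧ IsCircuit d p C) ∨
        ∃ C1 C2 : Finset (Sym2 V), IsCircuit d p C1 ∧ s(u, w) ∈ C1 ∧ C1 ⊆ E1 ∧
          IsCircuit d p C2 ∧ s(u, w) ∈ C2 ∧ C2 ⊆ E2 ∧
          C = (C1 ∪ C2).erase (s(u, w)))) := by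
  classical
  set f : Sym2 V → ((V × Fin d) → ℝ) := rigRow d p with hf
  have he0E12 : s(u, w) ∈ E1 ∩ E2 := by rw [hE12]; exact Finset.mem_singleton_self _
  have he0E1 : s(u, w) ∈ E1 := (Finset.mem_inter.mp he0E12).1
  have he0E2 : s(u, w) ∈ E2 := (Finset.mem_inter.mp he0E12).2
  have h0 : rigRow d p s(u, w) ≠ 0 := by
    intro h
    have h1 := congrFun h (u, (⟨0, hd⟩ : Fin d))
    simp only [rigRow_apply', eq_self_iff_true, if_true, if_neg huw, Pi.zero_apply,
      sub_zero, one_mul] at h1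
    exact generic_sub_ne hp huw _ h1
  -- the key property of the span intersection, in coefficient form
  have hkey : ∀ A B : Finset (Sym2 V), A ⊆ E1 → B ⊆ E2 →
      ∀ lam mu : Sym2 V → ℝ,
        ∑ e ∈ A, lam e • rigRow d p e = ∑ e ∈ B, mu e • rigRow d p e →
        ∃ c : ℝ, ∑ e ∈ A, lam e • rigRow d p e = c • rigRow d p s(u, w) ∧
          ∑ e ∈ B, mu e • rigRow d p e = c • rigRow d p s(u, w) := by
    intro A B hA hB lam mu h
    have hv1 : ∑ e ∈ A, lam e • rigRow d p e ∈
        Submodule.span ℝ (rigRow d p '' ↑E1) :=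
      Submodule.sum_mem _ (fun e he => Submodule.smul_mem _ _
        (Submodule.subset_span ⟨e, by exact_mod_cast hA he, rfl⟩))
    have hv2 : ∑ e ∈ A, lam e • rigRow d p e ∈
        Submodule.span ℝ (rigRow d p '' ↑E2) := by
      rw [h]
      exact Submodule.sum_mem _ (fun e he => Submodule.smul_mem _ _
        (Submodule.subset_span ⟨e, by exact_mod_cast hB he, rfl⟩))
    obtain ⟨c, hc⟩ := key_span hd V1 V2 E1 E2 u w huw hV12 hE1 hE2 hp _ hv1 hv2
    exact ⟨c, hc, h ▸ hc⟩
  have main1 : ∀ C : Finset (Sym2 V), C ⊆ E1 ∪ E2 →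
      (IsCircuit d p C ↔
        (C ⊆ E1 ∧ IsCircuit d p C) ∨ (C ⊆ E2 ∧ IsCircuit d p C) ∨
        ∃ C1 C2 : Finset (Sym2 V), IsCircuit d p C1 ∧ s(u, w) ∈ C1 ∧ C1 ⊆ E1 ∧
          IsCircuit d p C2 ∧ s(u, w) ∈ C2 ∧ C2 ⊆ E2 ∧
          C = (C1 ∪ C2).erase (s(u, w))) := by
    intro C hC
    constructor
    · intro hcirc'
      have hcirc := (isCircuit_iff C).mp hcirc'
      by_cases h1 : C ⊆ E1
      · exact Or.inl ⟨h1, hcirc'⟩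
      by_cases h2 : C ⊆ E2
      · exact Or.inr (Or.inl ⟨h2, hcirc'⟩)
      right; right
      obtain ⟨lam, hlam, hsum⟩ := circ_coeffs hcirc
      set A := C ∩ E1 with hAdef
      set B := C \ E1 with hBdef
      have hdisj : Disjoint A B := Finset.disjoint_left.mpr
        (fun {e} heA heB => (Finset.mem_sdiff.mp heB).2 (Finset.mem_inter.mp heA).2)
      have hunion : A ∪ B = C := by
        rw [hAdef, hBdef]; ext e
        simp only [Finset.mem_union, Finset.mem_inter, Finset.mem_sdiff]
        tauto
      have hA1 : A ⊆ E1 := Finset.inter_subset_right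
      have hB2 : B ⊆ E2 := fun e he => by
        obtain ⟨heC, heE1⟩ := Finset.mem_sdiff.mp he
        rcases Finset.mem_union.mp (hC heC) with h | h
        · exact absurd h heE1
        · exact h
      have hBne : B.Nonempty := by
        obtain ⟨g, hgC, hgE1⟩ := Finset.not_subset.mp h1
        exact ⟨g, Finset.mem_sdiff.mpr ⟨hgC, hgE1⟩⟩
      obtain ⟨g1, hg1C, hg1E2⟩ := Finset.not_subset.mp h2
      have hg1A : g1 ∈ A := Finset.mem_inter.mpr ⟨hg1C, by
        rcases Finset.mem_union.mp (hC hg1C) with h | h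
        · exact h
        · exact absurd h hg1E2⟩
      have hg1ne0 : g1 ≠ s(u, w) := fun h => hg1E2 (h ▸ he0E2)
      have hsplit : ∑ e ∈ A, lam e • rigRow d p e
          + ∑ e ∈ B, lam e • rigRow d p e = 0 := by
        rw [← Finset.sum_union hdisj, hunion]; exact hsum
      have hABeq : ∑ e ∈ A, lam e • rigRow d p e
          = ∑ e ∈ B, (fun e => -lam e) e • rigRow d p e := by
        simp only [neg_smul, Finset.sum_neg_distrib]
        exact eq_neg_of_add_eq_zero_left hsplit
      obtain ⟨c, hcA, hcB'⟩ := hkey A B hA1 hB2 lam _ hABeq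
      have hcB : ∑ e ∈ B, lam e • rigRow d p e = (-c) • rigRow d p s(u, w) := by
        calc ∑ e ∈ B, lam e • rigRow d p e
            = -(∑ e ∈ B, (fun e => -lam e) e • rigRow d p e) := by
              simp [neg_smul, Finset.sum_neg_distrib]
          _ = -(c • rigRow d p s(u, w)) := by rw [hcB']
          _ = (-c) • rigRow d p s(u, w) := by rw [neg_smul]
      have hnodepA : ¬ RigDep d p A := by
        intro hdep
        obtain ⟨g2, hg2B⟩ := hBne
        have hAsub : A ⊆ C.erase g2 := fun e he => Finset.mem_erase.mpr
          ⟨fun h => (Finset.mem_sdiff.mp hg2B).2 (h ▸ (Finset.mem_inter.mp he).2),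
            (Finset.mem_inter.mp he).1⟩
        exact hcirc.2 g2 (Finset.mem_sdiff.mp hg2B).1 (dep_mono hAsub hdep)
      have he0C : s(u, w) ∉ C := by
        intro he0
        have he0A : s(u, w) ∈ A := Finset.mem_inter.mpr ⟨he0, he0E1⟩
        apply hnodepA
        refine ⟨fun e => if e = s(u, w) then lam e - c else lam e,
          ⟨g1, hg1A, by
            show (if g1 = s(u, w) then lam g1 - c else lam g1) ≠ 0
            rw [if_neg hg1ne0]; exact hlam g1 hg1C⟩, ?_⟩
        have h2' : ∑ e ∈ A.erase s(u, w), lam e • rigRow d p e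
            = ∑ e ∈ A, lam e • rigRow d p e - lam s(u, w) • rigRow d p s(u, w) :=
          eq_sub_of_add_eq' (Finset.add_sum_erase A (fun e => lam e • rigRow d p e) he0A)
        have hsplitA : ∑ e ∈ A, (fun e => if e = s(u, w) then lam e - c else lam e) e
              • rigRow d p e
            = (lam s(u, w) - c) • rigRow d p s(u, w)
              + ∑ e ∈ A.erase s(u, w), lam e • rigRow d p e := by
          rw [← Finset.add_sum_erase A _ he0A]
          congr 1
          · show (if s(u, w) = s(u, w) then lam s(u, w) - c else lam s(u, w))
              • rigRow d p s(u, w) = _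
            rw [if_pos rfl]
          · refine Finset.sum_congr rfl (fun e he => ?_)
            have hne : e ≠ s(u, w) := (Finset.mem_erase.mp he).1
            show (if e = s(u, w) then lam e - c else lam e) • rigRow d p e = _
            rw [if_neg hne]
        rw [hsplitA, h2', sub_smul, hcA]
        abel
      have hcne : c ≠ 0 := by
        intro h
        apply hnodepA
        refine ⟨lam, ⟨g1, hg1A, hlam g1 hg1C⟩, ?_⟩
        rw [hcA, h, zero_smul]
      have he0A : s(u, w) ∉ A := fun h => he0C (Finset.mem_inter.mp h).1
      have he0B : s(u, w) ∉ B := fun h => he0C (Finset.mem_sdiff.mp h).1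
      have hside1 := side_min s(u, w) C A B lam c hdisj hunion he0A hBne hcne
        hlam hcirc.2 hcA hcB
      have hside2 := side_min s(u, w) C B A lam (-c) hdisj.symm
        (by rw [Finset.union_comm]; exact hunion) he0B ⟨g1, hg1A⟩
        (neg_ne_zero.mpr hcne) hlam hcirc.2 hcB
        (by rw [neg_neg]; exact hcA)
      refine ⟨insert s(u, w) A, insert s(u, w) B,
        (isCircuit_iff _).mpr hside1, Finset.mem_insert_self _ _,
        Finset.insert_subset he0E1 hA1,
        (isCircuit_iff _).mpr hside2, Finset.mem_insert_self _ _,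
        Finset.insert_subset he0E2 hB2, ?_⟩
      have huni : insert s(u, w) A ∪ insert s(u, w) B = insert s(u, w) C := by
        rw [← hunion]; ext e
        simp only [Finset.mem_union, Finset.mem_insert]
        tauto
      rw [huni, Finset.erase_insert he0C]
    · rintro (⟨hCE1, hcirc⟩ | ⟨hCE2, hcirc⟩ |
        ⟨C1, C2, hc1', he01, hC1E1, hc2', he02, hC2E2, hCeq⟩)
      · exact hcirc
      · exact hcirc
      · have hc1 := (isCircuit_iff C1).mp hc1'
        have hc2 := (isCircuit_iff C2).mp hc2'
        obtain ⟨α, hα, hαs⟩ := circ_coeffs hc1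
        obtain ⟨β, hβ, hβs⟩ := circ_coeffs hc2
        set A := C1.erase s(u, w) with hAdef
        set B := C2.erase s(u, w) with hBdef
        have hCAB : C = A ∪ B := by
          rw [hCeq, Finset.erase_union_distrib]
        have hdisjAB : Disjoint A B := Finset.disjoint_left.mpr (fun {e} heA heB => by
          have he1 : e ∈ E1 := hC1E1 (Finset.mem_of_mem_erase heA)
          have he2 : e ∈ E2 := hC2E2 (Finset.mem_of_mem_erase heB)
          have hm : e ∈ ({s(u, w)} : Finset (Sym2 V)) :=
            hE12 ▸ Finset.mem_inter.mpr ⟨he1, he2⟩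
          exact (Finset.mem_erase.mp heA).1 (Finset.mem_singleton.mp hm))
        have hAne : A.Nonempty := by
          rw [Finset.nonempty_iff_ne_empty]
          intro hAe
          rcases (Finset.erase_eq_empty_iff C1 s(u, w)).mp hAe with h | h
          · exact absurd (h ▸ he01) (Finset.notMem_empty _)
          · rw [h, Finset.sum_singleton] at hαs
            rcases smul_eq_zero.mp hαs with h' | h'
            · exact hα s(u, w) he01 h'
            · exact h0 h'
        have hBne : B.Nonempty := by
          rw [Finset.nonempty_iff_ne_empty]
          intro hBe
          rcases (Finset.erase_eq_empty_iff C2 s(u, w)).mp hBe with h | h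
          · exact absurd (h ▸ he02) (Finset.notMem_empty _)
          · rw [h, Finset.sum_singleton] at hβs
            rcases smul_eq_zero.mp hβs with h' | h'
            · exact hβ s(u, w) he02 h'
            · exact h0 h'
        have hsA : ∑ e ∈ A, α e • rigRow d p e
            = (-(α s(u, w))) • rigRow d p s(u, w) := by
          have h5 := Finset.add_sum_erase C1 (fun e => α e • rigRow d p e) he01
          rw [hαs] at h5
          rw [neg_smul]
          exact eq_neg_of_add_eq_zero_right h5
        have hsB : ∑ e ∈ B, β e • rigRow d p e
            = (-(β s(u, w))) • rigRow d p s(u, w) := by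
          have h5 := Finset.add_sum_erase C2 (fun e => β e • rigRow d p e) he02
          rw [hβs] at h5
          rw [neg_smul]
          exact eq_neg_of_add_eq_zero_right h5
        rw [isCircuit_iff, hCAB]
        constructor
        · obtain ⟨a, haA⟩ := hAne
          refine ⟨fun e => if e ∈ A then β s(u, w) * α e else -(α s(u, w)) * β e,
            ⟨a, Finset.mem_union_left _ haA, by
              show (if a ∈ A then β s(u, w) * α a else -(α s(u, w)) * β a) ≠ 0
              rw [if_pos haA]
              exact mul_ne_zero (hβ _ he02) (hα a (Finset.mem_of_mem_erase haA))⟩, ?_⟩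
          rw [Finset.sum_union hdisjAB]
          have h6 : ∑ e ∈ A, (fun e => if e ∈ A then β s(u, w) * α e
                else -(α s(u, w)) * β e) e • rigRow d p e
              = (β s(u, w)) • ∑ e ∈ A, α e • rigRow d p e := by
            rw [Finset.smul_sum]
            refine Finset.sum_congr rfl (fun e he => ?_)
            show (if e ∈ A then β s(u, w) * α e else -(α s(u, w)) * β e)
              • rigRow d p e = _
            rw [if_pos he, mul_smul]
          have h7 : ∑ e ∈ B, (fun e => if e ∈ A then β s(u, w) * α e
                else -(α s(u, w)) * β e) e • rigRow d p e
              = (-(α s(u, w))) • ∑ e ∈ B, β e • rigRow d p e := by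
            rw [Finset.smul_sum]
            refine Finset.sum_congr rfl (fun e he => ?_)
            show (if e ∈ A then β s(u, w) * α e else -(α s(u, w)) * β e)
              • rigRow d p e = _
            rw [if_neg (Finset.disjoint_right.mp hdisjAB he), mul_smul]
          rw [h6, h7, hsA, hsB, smul_smul, smul_smul, ← add_smul]
          convert zero_smul ℝ (rigRow d p s(u, w))
          ring
        · intro g hg
          have hkey1 : ∀ A' B' : Finset (Sym2 V), A' ⊆ C1.erase s(u, w) →
              B' ⊆ C2.erase s(u, w) → ∀ ν μ : Sym2 V → ℝ,
              ∑ e ∈ A', ν e • rigRow d p e = ∑ e ∈ B', μ e • rigRow d p e →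
              ∃ c : ℝ, ∑ e ∈ A', ν e • rigRow d p e = c • rigRow d p s(u, w) := by
            intro A' B' hA' hB' ν μ hh
            obtain ⟨c, hcc, -⟩ := hkey A' B'
              (hA'.trans ((Finset.erase_subset _ _).trans hC1E1))
              (hB'.trans ((Finset.erase_subset _ _).trans hC2E2)) ν μ hh
            exact ⟨c, hcc⟩
          have hkey2 : ∀ A' B' : Finset (Sym2 V), A' ⊆ C2.erase s(u, w) →
              B' ⊆ C1.erase s(u, w) → ∀ ν μ : Sym2 V → ℝ,
              ∑ e ∈ A', ν e • rigRow d p e = ∑ e ∈ B', μ e • rigRow d p e →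
              ∃ c : ℝ, ∑ e ∈ A', ν e • rigRow d p e = c • rigRow d p s(u, w) := by
            intro A' B' hA' hB' ν μ hh
            obtain ⟨c, -, hcc⟩ := hkey B' A'
              (hB'.trans ((Finset.erase_subset _ _).trans hC1E1))
              (hA'.trans ((Finset.erase_subset _ _).trans hC2E2)) μ ν hh.symm
            exact ⟨c, hcc⟩
          rcases Finset.mem_union.mp hg with hgA | hgB
          · exact side2_min s(u, w) C1 C2 h0 hkey1 he01 he02 hdisjAB
              hc1.2 hc2.2 g hgA
          · have h8 := side2_min s(u, w) C2 C1 h0 hkey2 he02 he01 hdisjAB.symm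
              hc2.2 hc1.2 g hgB
            rw [Finset.union_comm]
            exact h8
  refine ⟨main1, ?_⟩
  intro C hC
  have hC' : C ⊆ E1 ∪ E2 := hC.trans (Finset.erase_subset _ _)
  have he0C : s(u, w) ∉ C := fun h => (Finset.mem_erase.mp (hC h)).1 rfl
  refine Iff.trans (main1 C hC') ?_
  constructor
  · rintro (⟨h, hc⟩ | ⟨h, hc⟩ | h3)
    · exact Or.inl ⟨fun e he => Finset.mem_erase.mpr
        ⟨fun heq => he0C (heq ▸ he), h he⟩, hc⟩
    · exact Or.inr (Or.inl ⟨fun e he => Finset.mem_erase.mpr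
        ⟨fun heq => he0C (heq ▸ he), h he⟩, hc⟩)
    · exact Or.inr (Or.inr h3)
  · rintro (⟨h, hc⟩ | ⟨h, hc⟩ | h3)
    · exact Or.inl ⟨h.trans (Finset.erase_subset _ _), hc⟩
    · exact Or.inr (Or.inl ⟨h.trans (Finset.erase_subset _ _), hc⟩)
    · exact Or.inr (Or.inr h3)
end
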